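/- Let A be an invertible n×n real matrix (n ≥ 2) with columns X_k = A e_k and X_k* = (A⁻¹)* e_k, let P₁ be the orthogonal projection onto H₁ = span(X_i : i ≥ 2), and set Y_k* = P₁X_k* for k = 2,…,n. Then for each k ∈ {2,…,n}, ‖Y_k*‖₂ = 1/dist(X_k, H_{1,k}), where H_{1,k} = span(X_i : i ∉ {1,k}). -/

import Mathlib

open scoped RealInnerProductSpace

/-- Helper: to be in the orthogonal complement of a span, it suffices to be
orthogonal to the generators. -/
lemma mem_orthogonal_span_aux {E : Type*} [NormedAddCommGroup E] [InnerProductSpace ℝ E]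
    {S : Set E} {x : E} (h : ∀ u ∈ S, ⟪u, x⟫ = 0) : x ∈ (Submodule.span ℝ S)ᗮ := by
  rw [Submodule.mem_orthogonal]
  intro u hu
  induction hu using Submodule.span_induction with
  | mem u hu => exact h u hu
  | zero => simp
  | add u v _ _ hu hv => rw [inner_add_left, hu, hv, add_zero]
  | smul c u _ hu => rw [inner_smul_left, hu, mul_zero]

/-- ‖Y_k*‖ = 1 / dist(X_k, H_{1,k}) for the dual system Y_k* = P₁X_k*. -/
theorem stmt_8 (n : ℕ) (A : Matrix (Fin (n + 2)) (Fin (n + 2)) ℝ) (hA : IsUnit A.det)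
    (X Xstar : Fin (n + 2) → EuclideanSpace ℝ (Fin (n + 2)))
    (hX : ∀ k, X k = fun i => A i k)
    (hXstar : ∀ k, Xstar k = fun i => A⁻¹ k i)
    (H₁ : Submodule ℝ (EuclideanSpace ℝ (Fin (n + 2))))
    (hH₁ : H₁ = Submodule.span ℝ (X '' {i | i ≠ 0}))
    (Y : Fin (n + 2) → EuclideanSpace ℝ (Fin (n + 2)))
    (hY : ∀ k, Y k = (H₁.orthogonalProjectionOnto (Xstar k) : EuclideanSpace ℝ (Fin (n + 2)))) :
    ∀ k, k ≠ 0 →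
      ‖Y k‖ = 1 / Metric.infDist (X k)
        (Submodule.span ℝ (X '' {i | i ≠ 0 ∧ i ≠ k}) :
          Set (EuclideanSpace ℝ (Fin (n + 2)))) := by
  intro k hk
  -- biorthogonality
  have biorth : ∀ j i, ⟪Xstar j, X i⟫ = if j = i then 1 else 0 := by
    intro j i
    have h1 : ⟪Xstar j, X i⟫ = ∑ m, A⁻¹ j m * A m i := by
      rw [PiLp.inner_apply]
      simp [hXstar, hX, mul_comm]
    have h2 : (A⁻¹ * A) j i = if j = i then 1 else 0 := by
      rw [Matrix.nonsing_inv_mul A hA, Matrix.one_apply]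
    rw [h1, ← Matrix.mul_apply, h2]
  set K : Submodule ℝ (EuclideanSpace ℝ (Fin (n + 2))) :=
    Submodule.span ℝ (X '' {i | i ≠ 0 ∧ i ≠ k}) with hKdef
  have hKH : K ≤ H₁ := by
    rw [hH₁]
    exact Submodule.span_mono (Set.image_mono fun i hi => hi.1)
  have hXmem : ∀ j, j ≠ 0 → X j ∈ H₁ := fun j hj =>
    hH₁ ▸ Submodule.subset_span ⟨j, hj, rfl⟩
  set w : EuclideanSpace ℝ (Fin (n + 2)) := ((K.orthogonalProjectionOnto (X k) : EuclideanSpace ℝ (Fin (n + 2)))) with hwdef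
  set v : EuclideanSpace ℝ (Fin (n + 2)) := X k - w with hvdef
  have hwK : w ∈ K := (K.orthogonalProjectionOnto (X k)).2
  have hvK : v ∈ Kᗮ := by
    rw [hvdef, hwdef, Submodule.coe_orthogonalProjectionOnto_apply]
    exact Submodule.sub_starProjection_mem_orthogonal (X k)
  have hYH : Y k ∈ H₁ := by rw [hY]; exact (H₁.orthogonalProjectionOnto (Xstar k)).2
  -- ⟪Y k, X j⟫ = δ_{kj} for j ≠ 0
  have hinner : ∀ j, j ≠ 0 → ⟪Y k, X j⟫ = if k = j then 1 else 0 := by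
    intro j hj
    have h1 : ⟪Xstar k - Y k, X j⟫ = 0 := by
      rw [hY, Submodule.coe_orthogonalProjectionOnto_apply]
      exact (Submodule.mem_orthogonal' H₁ _).1
        (Submodule.sub_starProjection_mem_orthogonal (K := H₁) (Xstar k)) (X j) (hXmem j hj)
    rw [inner_sub_left] at h1
    have := biorth k j
    linarith
  -- Y k ⊥ K
  have hYK : Y k ∈ Kᗮ := by
    apply mem_orthogonal_span_aux
    rintro _ ⟨j, ⟨hj0, hjk⟩, rfl⟩
    rw [real_inner_comm, hinner j hj0, if_neg (fun h => hjk h.symm)]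
  have hYXk : ⟪Y k, X k⟫ = 1 := by simpa using hinner k hk
  have hYw : ⟪Y k, w⟫ = 0 := (Submodule.mem_orthogonal' K _).1 hYK w hwK
  have hYv : ⟪Y k, v⟫ = 1 := by rw [hvdef, inner_sub_right, hYXk, hYw]; ring
  have hvne : v ≠ 0 := by
    intro h
    rw [h, inner_zero_right] at hYv
    norm_num at hYv
  have hvpos : (0 : ℝ) < ‖v‖ := norm_pos_iff.2 hvne
  have hvH : v ∈ H₁ := Submodule.sub_mem _ (hXmem k hk) (hKH hwK)
  have hXkv : ⟪X k, v⟫ = ‖v‖ ^ 2 := by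
    have hXk : X k = v + w := by rw [hvdef]; abel
    rw [hXk, inner_add_left, real_inner_self_eq_norm_sq,
      (Submodule.mem_orthogonal K v).1 hvK w hwK, add_zero]
  -- the key identity Y k = ‖v‖⁻² • v
  have key : Y k = (‖v‖ ^ 2)⁻¹ • v := by
    have hd1 : Y k - (‖v‖ ^ 2)⁻¹ • v ∈ H₁ :=
      Submodule.sub_mem _ hYH (Submodule.smul_mem _ _ hvH)
    have hd2 : Y k - (‖v‖ ^ 2)⁻¹ • v ∈ H₁ᗮ := by
      rw [hH₁]
      apply mem_orthogonal_span_aux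
      rintro _ ⟨j, hj, rfl⟩
      simp only [Set.mem_setOf_eq] at hj
      rw [inner_sub_right, real_inner_smul_right]
      by_cases hjk : j = k
      · rw [hjk]
        have h1 : ⟪X k, Y k⟫ = (1 : ℝ) := by rw [real_inner_comm]; exact hYXk
        rw [h1, hXkv]
        field_simp
        norm_num
      · have hXjK : X j ∈ K := Submodule.subset_span ⟨j, ⟨hj, hjk⟩, rfl⟩
        rw [real_inner_comm, hinner j hj, if_neg (fun h => hjk h.symm),
          (Submodule.mem_orthogonal K v).1 hvK (X j) hXjK]
        ring
    have : Y k - (‖v‖ ^ 2)⁻¹ • v = 0 := by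
      have := (Submodule.mem_orthogonal H₁ _).1 hd2 _ hd1
      exact inner_self_eq_zero.1 this
    linear_combination (norm := module) this
  -- distance equals ‖v‖
  have hdist : Metric.infDist (X k) (K : Set (EuclideanSpace ℝ (Fin (n + 2)))) = ‖v‖ := by
    rw [Metric.infDist_eq_iInf]
    simp_rw [dist_eq_norm]
    rw [hvdef, hwdef, Submodule.coe_orthogonalProjectionOnto_apply]
    exact (Submodule.starProjection_minimal (X k)).symm
  rw [key, norm_smul, hdist]
  rw [Real.norm_eq_abs, abs_of_pos (by positivity)]
  field_simp
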